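/- arXiv:1402.6560 — 2 statements merged into one kernel-verified Lean document; each statement's English description precedes it below -/
import Mathlib

section
/- N-ary solution-extension lemma: let ℰ be piecewise extensible, φ = φ_ρ × ∏_{i=1}^m φᵢ with dᵢ = d(φᵢ), d_ρ = d(φ_ρ), rᵢ = dᵢ ∧ (⋁_{j≠i} d_j), and suppose d_ρ ≥ ⋁ᵢ rᵢ. Given x ∈ c_{φ^{↓d_ρ}}, for each i an extension yᵢ ∈ E_{φᵢ}(x_{d_ρ∧dᵢ}), and z a merger of x and y₁,…,y_m (i.e., z_{d_ρ} = x and z_{dᵢ} = yᵢ for each i), then z ∈ c_φ. -/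
/-- A valuation algebra over a lattice `D` (axioms A1–A6). -/
structure ValuationAlgebra (Φ : Type*) (D : Type*) [Lattice D] [OrderBot D] where
  dom : Φ → D
  comb : Φ → Φ → Φ
  proj : Φ → D → Φ
  /-- A1: commutativity. -/
  comb_comm : ∀ φ ψ, comb φ ψ = comb ψ φ
  /-- A1: associativity. -/
  comb_assoc : ∀ φ ψ χ, comb (comb φ ψ) χ = comb φ (comb ψ χ)
  /-- A2: labeling. -/
  dom_comb : ∀ φ ψ, dom (comb φ ψ) = dom φ ⊔ dom ψ
  /-- A3: projection. -/
  dom_proj : ∀ φ x, x ≤ dom φ → dom (proj φ x) = x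
  /-- A4: transitivity. -/
  proj_trans : ∀ φ x y, x ≤ y → y ≤ dom φ → proj (proj φ y) x = proj φ x
  /-- A5: combination. -/
  comb_proj : ∀ φ ψ z, dom φ ≤ z → z ≤ dom φ ⊔ dom ψ →
      proj (comb ψ φ) z = comb φ (proj ψ (z ⊓ dom ψ))
  /-- A6: domain. -/
  proj_dom : ∀ φ, proj φ (dom φ) = φ

/-- A configuration system over a lattice `D`: mutually exclusive configuration
sets `Γ s` with surjective, compatible projections, and `Γ ⊥ = {⋄}`. -/
structure ConfigSystem (D : Type*) [Lattice D] [OrderBot D] (Γ : D → Type*) where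
  cproj : ∀ {s t : D}, s ≤ t → Γ t → Γ s
  cproj_surj : ∀ {s t : D} (h : s ≤ t), Function.Surjective (cproj h)
  cproj_comp : ∀ {s t u : D} (h₁ : s ≤ t) (h₂ : t ≤ u) (x : Γ u),
      cproj h₁ (cproj h₂ x) = cproj (h₁.trans h₂) x
  cproj_refl : ∀ {s : D} (x : Γ s), cproj le_rfl x = x
  /-- The empty configuration `⋄`. -/
  diamond : Γ ⊥
  diamond_unique : ∀ x : Γ ⊥, x = diamond

/-- A family of configuration extension sets `E_φ(x) ⊆ Γ_{d(φ)}` for `x ∈ Γ_s`,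
`s ≤ d(φ)`, together with the solution concept `c`, satisfying conditions
(1)–(3): identity on the own scope, two-step decomposition through intermediate
scopes, and `c_φ = E_φ(⋄)`.  (The index `d` together with the proof
`VA.dom φ = d` is used to state the scope of the extension sets.) -/
structure ExtFamily {Φ D : Type*} [Lattice D] [OrderBot D] {Γ : D → Type*}
    (VA : ValuationAlgebra Φ D) (CS : ConfigSystem D Γ) where
  E : ∀ (φ : Φ) {s d : D}, VA.dom φ = d → s ≤ d → Γ s → Set (Γ d)
  sol : ∀ (φ : Φ) {d : D}, VA.dom φ = d → Set (Γ d)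
  self_ext : ∀ (φ : Φ) (d : D) (hd : VA.dom φ = d) (x : Γ d),
      E φ hd le_rfl x = {x}
  two_step : ∀ (φ : Φ) (d : D) (hd : VA.dom φ = d) (s t : D)
      (hst : s ≤ t) (_ : s ≠ t) (htd : t ≤ d) (x : Γ s),
      E φ hd (hst.trans htd) x
        = {y : Γ d | CS.cproj htd y
              ∈ E (VA.proj φ t) (VA.dom_proj φ t (htd.trans_eq hd.symm)) hst x
            ∧ y ∈ E φ hd htd (CS.cproj htd y)}
  sol_eq : ∀ (φ : Φ) (d : D) (hd : VA.dom φ = d),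
      sol φ hd = E φ hd bot_le CS.diamond

/-- A configuration system is merge-friendly when configurations agreeing on
the meet of their scopes admit a merger on the join of their scopes. -/
def ConfigSystem.MergeFriendly {D : Type*} [Lattice D] [OrderBot D] {Γ : D → Type*}
    (CS : ConfigSystem D Γ) : Prop :=
  ∀ (s t : D) (x : Γ s) (y : Γ t),
    CS.cproj inf_le_left x = CS.cproj inf_le_right y →
      ∃ z : Γ (s ⊔ t), CS.cproj le_sup_left z = x ∧ CS.cproj le_sup_right z = y

/-- Piecewise extensibility: a simultaneous extension of `x` to two valuations
is an extension of `x` to their combination. -/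
def ExtFamily.PiecewiseExtensible {Φ D : Type*} [Lattice D] [OrderBot D]
    {Γ : D → Type*} {VA : ValuationAlgebra Φ D} {CS : ConfigSystem D Γ}
    (F : ExtFamily VA CS) : Prop :=
  ∀ (φ₁ φ₂ : Φ) (d₁ d₂ : D) (h₁ : VA.dom φ₁ = d₁) (h₂ : VA.dom φ₂ = d₂)
    (t : D) (ht₁ : d₁ ⊓ d₂ ≤ t) (ht₂ : t ≤ d₁ ⊔ d₂)
    (x : Γ t) (z : Γ (d₁ ⊔ d₂)),
    CS.cproj le_sup_left z ∈ F.E φ₁ h₁ inf_le_right (CS.cproj inf_le_left x) →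
    CS.cproj le_sup_right z ∈ F.E φ₂ h₂ inf_le_right (CS.cproj inf_le_left x) →
    z ∈ F.E (VA.comb φ₁ φ₂)
          (show VA.dom (VA.comb φ₁ φ₂) = d₁ ⊔ d₂ by rw [VA.dom_comb, h₁, h₂])
          ht₂ x

/-- The combination `f 0 × f 1 × ⋯ × f n` of finitely many valuations. -/
def prodFin {Φ D : Type*} [Lattice D] [OrderBot D] (VA : ValuationAlgebra Φ D)
    {n : ℕ} (f : Fin (n + 1) → Φ) : Φ :=
  (List.ofFn fun i : Fin n => f i.succ).foldl VA.comb (f 0)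


section Aux
variable {Φ D : Type*} [Lattice D] [OrderBot D] {Γ : D → Type*}

/-- Cast a configuration along an equality of scopes. -/
def cfgCast {Γ : D → Type*} {s t : D} (h : s = t) (x : Γ s) : Γ t := h ▸ x

lemma cproj_cast_src (CS : ConfigSystem D Γ) {s t t' : D} (et : t = t')
    (h : s ≤ t) (h' : s ≤ t') (x : Γ t) :
    CS.cproj h' (cfgCast et x) = CS.cproj h x := by subst et; rfl

lemma cproj_cast_tgt (CS : ConfigSystem D Γ) {s s' t : D} (es : s = s')
    (h : s ≤ t) (h' : s' ≤ t) (x : Γ t) :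
    cfgCast es (CS.cproj h x) = CS.cproj h' x := by subst es; rfl

lemma cproj_self (CS : ConfigSystem D Γ) {s s' : D} (es : s = s') (h : s' ≤ s)
    (x : Γ s) : CS.cproj h x = cfgCast es x := by subst es; exact CS.cproj_refl x

lemma E_congr {VA : ValuationAlgebra Φ D} {CS : ConfigSystem D Γ}
    (F : ExtFamily VA CS) (φ : Φ) {s s' dd dd' : D}
    (hd : VA.dom φ = dd) (hd' : VA.dom φ = dd')
    (h : s ≤ dd) (h' : s' ≤ dd') (es : s = s') (ed : dd = dd')
    (x : Γ s) (w : Γ dd) :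
    w ∈ F.E φ hd h x ↔ cfgCast ed w ∈ F.E φ hd' h' (cfgCast es x) := by
  subst es; subst ed; rfl

lemma prodFin_zero (VA : ValuationAlgebra Φ D) (f : Fin 1 → Φ) :
    prodFin VA f = f 0 := by simp [prodFin]

lemma prodFin_succ (VA : ValuationAlgebra Φ D) {n : ℕ} (f : Fin (n + 2) → Φ) :
    prodFin VA f
      = VA.comb (prodFin VA fun i : Fin (n + 1) => f i.castSucc)
          (f (Fin.last (n + 1))) := by
  simp only [prodFin, List.ofFn_succ']
  rw [List.concat_eq_append, List.foldl_concat]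
  rw [show (Fin.last n).succ = Fin.last (n+1) from rfl]
  congr 2

lemma sup_univ_succ {n : ℕ} (g : Fin (n + 1) → D) :
    Finset.univ.sup g
      = (Finset.univ.sup fun i : Fin n => g i.castSucc) ⊔ g (Fin.last n) := by
  apply le_antisymm
  · refine Finset.sup_le fun i _ => ?_
    rcases eq_or_ne i (Fin.last n) with h | h
    · subst h; exact le_sup_right
    · obtain ⟨j, rfl⟩ := Fin.exists_castSucc_eq.mpr h
      exact (Finset.le_sup (f := fun i : Fin n => g i.castSucc) (Finset.mem_univ j)).trans le_sup_left
  · exact sup_le (Finset.sup_le fun i _ => Finset.le_sup (Finset.mem_univ _))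
      (Finset.le_sup (Finset.mem_univ _))

lemma dom_prodFin (VA : ValuationAlgebra Φ D) :
    ∀ {n : ℕ} (f : Fin (n + 1) → Φ),
      VA.dom (prodFin VA f) = Finset.univ.sup fun i => VA.dom (f i)
  | 0, f => by
      rw [prodFin_zero, sup_univ_succ]
      simp
  | n + 1, f => by
      rw [prodFin_succ, VA.dom_comb, dom_prodFin VA, sup_univ_succ fun i => VA.dom (f i)]

end Aux


lemma cfgCast_cfgCast {D : Type*} {Γ : D → Type*} {a b c : D} (h1 : a = b)
    (h2 : b = c) (x : Γ a) : cfgCast h2 (cfgCast h1 x) = cfgCast (h1.trans h2) x := by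
  subst h1; subst h2; rfl

lemma cproj_eq_cast' {D : Type*} [Lattice D] [OrderBot D] {Γ : D → Type*}
    (CS : ConfigSystem D Γ) {s s' : D} (es : s' = s) (h : s' ≤ s) (x : Γ s) :
    cfgCast es (CS.cproj h x) = x := by subst es; exact CS.cproj_refl x

lemma E_phi_congr {Φ D : Type*} [Lattice D] [OrderBot D] {Γ : D → Type*}
    {VA : ValuationAlgebra Φ D} {CS : ConfigSystem D Γ} (F : ExtFamily VA CS)
    {φ φ' : Φ} (e : φ = φ') {s dd : D} (hd : VA.dom φ = dd) (hd' : VA.dom φ' = dd)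
    (h : s ≤ dd) (x : Γ s) (w : Γ dd) :
    w ∈ F.E φ hd h x ↔ w ∈ F.E φ' hd' h x := by subst e; rfl

lemma key_lemma {Φ D : Type*} [Lattice D] [OrderBot D] {Γ : D → Type*}
    {VA : ValuationAlgebra Φ D} {CS : ConfigSystem D Γ}
    {F : ExtFamily VA CS} (hF : F.PiecewiseExtensible) :
    ∀ (m : ℕ) (φs : Fin (m + 1) → Φ) (d : Fin (m + 1) → D)
      (hd : ∀ i, VA.dom (φs i) = d i)
      (u : D) (hu : VA.dom (prodFin VA φs) = u)
      (hdu : ∀ i, d i ≤ u)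
      (s : D) (hs : ∀ i, d i ⊓ (Finset.univ.erase i).sup d ≤ s) (hsu : s ≤ u)
      (x : Γ s) (w : Γ u)
      (hw : ∀ i, CS.cproj (hdu i) w
              ∈ F.E (φs i) (hd i) inf_le_right (CS.cproj inf_le_left x)),
      w ∈ F.E (prodFin VA φs) hu hsu x
  | 0, φs, d, hd, u, hu, hdu, s, hs, hsu, x, w, hw => by
      have hd0u : VA.dom (φs 0) = u :=
        (congrArg VA.dom (prodFin_zero VA φs)).symm.trans hu
      have ed : d 0 = u := (hd 0).symm.trans hd0u
      have es : s ⊓ d 0 = s := inf_eq_left.mpr (hsu.trans ed.ge)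
      rw [E_phi_congr F (prodFin_zero VA φs) hu hd0u]
      have h2 := (E_congr F (φs 0) (hd 0) hd0u inf_le_right hsu es ed
        (CS.cproj inf_le_left x) (CS.cproj (hdu 0) w)).mp (hw 0)
      rwa [cproj_eq_cast' CS ed (hdu 0) w,
        cproj_eq_cast' CS es inf_le_left x] at h2
  | (m + 1), φs, d, hd, u, hu, hdu, s, hs, hsu, x, w, hw => by
      set g : Fin (m + 1) → Φ := fun i => φs i.castSucc with hg
      set dg : Fin (m + 1) → D := fun i => d i.castSucc with hdg
      have hdG : ∀ i, VA.dom (g i) = dg i := fun i => hd i.castSucc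
      set Q := prodFin VA g with hQ
      set ψ := φs (Fin.last (m + 1)) with hψ
      have eP : prodFin VA φs = VA.comb Q ψ := prodFin_succ VA φs
      have hdomQ : VA.dom Q = Finset.univ.sup dg :=
        (dom_prodFin VA g).trans (Finset.sup_congr rfl fun i _ => hdG i)
      have hdomψ : VA.dom ψ = d (Fin.last (m + 1)) := hd _
      have hduQ : ∀ i, dg i ≤ VA.dom Q := fun i =>
        (Finset.le_sup (Finset.mem_univ i)).trans hdomQ.ge
      have hQle : VA.dom Q ≤ (Finset.univ.erase (Fin.last (m + 1))).sup d := by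
        rw [hdomQ]
        exact Finset.sup_le fun i _ => Finset.le_sup
          (Finset.mem_erase.mpr ⟨(Fin.castSucc_lt_last i).ne, Finset.mem_univ _⟩)
      have ht₁ : VA.dom Q ⊓ VA.dom ψ ≤ s := by
        refine le_trans (inf_le_inf hQle hdomψ.le) ?_
        rw [inf_comm]; exact hs (Fin.last (m + 1))
      have e : u = VA.dom Q ⊔ VA.dom ψ := hu.symm.trans (by rw [eP, VA.dom_comb])
      have ht₂ : s ≤ VA.dom Q ⊔ VA.dom ψ := hsu.trans e.le
      set w' : Γ (VA.dom Q ⊔ VA.dom ψ) := cfgCast e w with hw'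
      -- condition for ψ
      have es2 : s ⊓ d (Fin.last (m + 1)) = s ⊓ VA.dom ψ := by rw [hdomψ]
      have cond2 : CS.cproj le_sup_right w'
          ∈ F.E ψ rfl inf_le_right (CS.cproj inf_le_left x) := by
        have h2 := (E_congr F ψ (hd _) rfl inf_le_right inf_le_right es2
          hdomψ.symm (CS.cproj inf_le_left x)
          (CS.cproj (hdu (Fin.last (m + 1))) w)).mp (hw (Fin.last (m + 1)))
        have e1 : cfgCast hdomψ.symm (CS.cproj (hdu (Fin.last (m + 1))) w)
            = CS.cproj le_sup_right w' := by
          rw [hw', cproj_cast_src CS e (le_sup_right.trans e.ge) le_sup_right w]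
          exact cproj_cast_tgt CS hdomψ.symm _ _ w
        have e2 : cfgCast es2 (CS.cproj inf_le_left x)
            = (CS.cproj inf_le_left x : Γ (s ⊓ VA.dom ψ)) :=
          cproj_cast_tgt CS es2 _ _ x
        rwa [e1, e2] at h2
      -- condition for Q via the induction hypothesis
      have hsG : ∀ i : Fin (m + 1),
          dg i ⊓ (Finset.univ.erase i).sup dg ≤ s ⊓ VA.dom Q := by
        intro i
        refine le_inf (le_trans ?_ (hs i.castSucc)) (inf_le_left.trans (hduQ i))
        refine inf_le_inf_left _ (Finset.sup_le fun j hj => ?_)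
        show d j.castSucc ≤ _
        refine Finset.le_sup (Finset.mem_erase.mpr ⟨?_, Finset.mem_univ _⟩)
        exact fun h => (Finset.mem_erase.mp hj).1 (Fin.castSucc_injective _ h)
      have hwG : ∀ i : Fin (m + 1), CS.cproj (hduQ i) (CS.cproj le_sup_left w')
          ∈ F.E (g i) (hdG i) inf_le_right
              (CS.cproj inf_le_left (CS.cproj (inf_le_left : s ⊓ VA.dom Q ≤ s) x)) := by
        intro i
        have es3 : s ⊓ dg i = s ⊓ VA.dom Q ⊓ dg i := by
          rw [inf_assoc, inf_eq_right.mpr (hduQ i)]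
        have h3 := (E_congr F (g i) (hd i.castSucc) (hdG i) inf_le_right
          inf_le_right es3 rfl (CS.cproj inf_le_left x)
          (CS.cproj (hdu i.castSucc) w)).mp (hw i.castSucc)
        have e1 : cfgCast (rfl : dg i = dg i) (CS.cproj (hdu i.castSucc) w)
            = CS.cproj (hduQ i) (CS.cproj le_sup_left w') := by
          rw [hw', cproj_cast_src CS e (le_sup_left.trans e.ge) le_sup_left w,
            CS.cproj_comp]
          rfl
        have e2 : cfgCast es3 (CS.cproj inf_le_left x)
            = CS.cproj inf_le_left (CS.cproj (inf_le_left : s ⊓ VA.dom Q ≤ s) x) := by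
          rw [CS.cproj_comp]
          exact cproj_cast_tgt CS es3 _ _ x
        rwa [e1, e2] at h3
      have cond1 : CS.cproj le_sup_left w'
          ∈ F.E Q rfl inf_le_right (CS.cproj inf_le_left x) :=
        key_lemma hF m g dg hdG (VA.dom Q) rfl hduQ (s ⊓ VA.dom Q) hsG
          inf_le_right (CS.cproj inf_le_left x) (CS.cproj le_sup_left w') hwG
      have main := hF Q ψ (VA.dom Q) (VA.dom ψ) rfl rfl s ht₁ ht₂ x w' cond1 cond2
      have hu' : VA.dom (VA.comb Q ψ) = u := (congrArg VA.dom eP).symm.trans hu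
      rw [E_phi_congr F eP hu hu']
      have h4 := (E_congr F (VA.comb Q ψ)
        (show VA.dom (VA.comb Q ψ) = VA.dom Q ⊔ VA.dom ψ by rw [VA.dom_comb])
        hu' ht₂ hsu rfl e.symm x w').mp main
      have e5 : cfgCast e.symm w' = w := by
        rw [hw', cfgCast_cfgCast]; rfl
      rwa [e5] at h4

/-- n-ary solution-extension lemma.  Let `ℰ` be piecewise
extensible, `φ = φ_ρ × ∏ᵢ φᵢ` with `dᵢ = d(φᵢ)`, `d_ρ = d(φ_ρ)`,
`rᵢ = dᵢ ⊓ ⨆_{j≠i} dⱼ`, and suppose `d_ρ ≥ ⨆ᵢ rᵢ`.  Given `x ∈ c_{φ^{↓d_ρ}}`,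
extensions `yᵢ ∈ E_{φᵢ}(x_{d_ρ⊓dᵢ})`, and `z` a merger of `x` and the `yᵢ`
(`z_{d_ρ} = x`, `z_{dᵢ} = yᵢ`), we have `z ∈ c_φ`. -/
theorem nary_solution_extension {Φ D : Type*} [Lattice D] [OrderBot D]
    {Γ : D → Type*} (VA : ValuationAlgebra Φ D) (CS : ConfigSystem D Γ)
    (F : ExtFamily VA CS) (hF : F.PiecewiseExtensible)
    (m : ℕ) (φρ : Φ) (φs : Fin (m + 1) → Φ)
    (dρ : D) (d : Fin (m + 1) → D)
    (hρ : VA.dom φρ = dρ) (hd : ∀ i, VA.dom (φs i) = d i)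
    (hsep : Finset.univ.sup (fun i => d i ⊓ (Finset.univ.erase i).sup d) ≤ dρ)
    (hP : VA.dom (prodFin VA φs) = Finset.univ.sup d)
    (x : Γ dρ) (y : ∀ i, Γ (d i)) (z : Γ (dρ ⊔ Finset.univ.sup d))
    (hx : x ∈ F.sol (VA.proj (VA.comb φρ (prodFin VA φs)) dρ)
            (VA.dom_proj (VA.comb φρ (prodFin VA φs)) dρ
              (by rw [VA.dom_comb, hρ]; exact le_sup_left)))
    (hy : ∀ i, y i ∈ F.E (φs i) (hd i) inf_le_right (CS.cproj inf_le_left x))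
    (hzx : CS.cproj le_sup_left z = x)
    (hzy : ∀ i, CS.cproj ((Finset.le_sup (Finset.mem_univ i)).trans le_sup_right) z
            = y i) :
    z ∈ F.sol (VA.comb φρ (prodFin VA φs))
          (show VA.dom (VA.comb φρ (prodFin VA φs)) = dρ ⊔ Finset.univ.sup d by
            rw [VA.dom_comb, hρ, hP]) := by
  have hdu : ∀ i, d i ≤ Finset.univ.sup d := fun i => Finset.le_sup (Finset.mem_univ i)
  have hdφ : VA.dom (VA.comb φρ (prodFin VA φs)) = dρ ⊔ Finset.univ.sup d := by
    rw [VA.dom_comb, hρ, hP]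
  -- main claim: z extends x to the full combination
  have main : z ∈ F.E (VA.comb φρ (prodFin VA φs)) hdφ le_sup_left x := by
    refine hF φρ (prodFin VA φs) dρ (Finset.univ.sup d) hρ hP dρ inf_le_left
      le_sup_left x z ?_ ?_
    · -- condition for φρ
      rw [hzx]
      have hself : x ∈ F.E φρ hρ le_rfl x := by
        rw [F.self_ext φρ dρ hρ x]; rfl
      have es : dρ = dρ ⊓ dρ := (inf_idem dρ).symm
      have h2 := (E_congr F φρ hρ hρ le_rfl inf_le_right es rfl x x).mp hself
      rwa [show cfgCast es x = CS.cproj inf_le_left x from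
        (cproj_self CS es inf_le_left x).symm] at h2
    · -- condition for the product, via the key lemma
      refine key_lemma hF m φs d hd (Finset.univ.sup d) hP hdu
        (dρ ⊓ Finset.univ.sup d) (fun i => le_inf
          ((Finset.le_sup (Finset.mem_univ i)).trans hsep)
          (inf_le_left.trans (hdu i)))
        inf_le_right (CS.cproj inf_le_left x) (CS.cproj le_sup_right z) ?_
      intro i
      have es : dρ ⊓ d i = dρ ⊓ Finset.univ.sup d ⊓ d i := by
        rw [inf_assoc, inf_eq_right.mpr (hdu i)]
      have h3 := (E_congr F (φs i) (hd i) (hd i) inf_le_right inf_le_right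
        es rfl (CS.cproj inf_le_left x) (y i)).mp (hy i)
      have e1 : cfgCast (rfl : d i = d i) (y i)
          = CS.cproj (hdu i) (CS.cproj le_sup_right z) := by
        rw [CS.cproj_comp]
        exact (hzy i).symm
      have e2 : cfgCast es (CS.cproj inf_le_left x)
          = CS.cproj inf_le_left
              (CS.cproj (inf_le_left : dρ ⊓ Finset.univ.sup d ≤ dρ) x) := by
        rw [CS.cproj_comp]
        exact cproj_cast_tgt CS es _ _ x
      rwa [e1, e2] at h3
  rw [F.sol_eq]
  rcases eq_or_ne dρ ⊥ with hbot | hbot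
  · have h4 := (E_congr F (VA.comb φρ (prodFin VA φs)) hdφ hdφ le_sup_left
      bot_le hbot rfl x z).mp main
    rwa [CS.diamond_unique (cfgCast hbot x)] at h4
  · have ts := F.two_step (VA.comb φρ (prodFin VA φs)) (dρ ⊔ Finset.univ.sup d)
      hdφ ⊥ dρ bot_le (Ne.symm hbot) le_sup_left CS.diamond
    show z ∈ F.E (VA.comb φρ (prodFin VA φs)) hdφ (bot_le.trans le_sup_left)
      CS.diamond
    rw [ts]
    refine ⟨?_, ?_⟩
    · rw [hzx]
      rw [F.sol_eq] at hx
      exact hx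
    · rw [hzx]
      exact main
end

section
/- Fully piecewise extensibility of the max-plus extension family at the meet scope: for real-valued φ₁ on Ω_{D₁}, φ₂ on Ω_{D₂}, x ∈ Ω_{D₁∩D₂}, and z ∈ Ω_{D₁∪D₂} extending x, z maximizes φ₁⊗φ₂ among extensions of x if and only if z↓D₁ maximizes φ₁ among extensions of x and z↓D₂ maximizes φ₂ among extensions of x. -/
open Classical

variable {V : Type*} [DecidableEq V]

/-- The set of configurations (tuples) over a finite set `S` of variables with frames `Ω`. -/
abbrev Cfg (Ω : V → Type*) (S : Finset V) := (v : {x // x ∈ S}) → Ω v.1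

/-- Restriction (tuple projection) of a configuration to a subset of its domain. -/
def restrict {Ω : V → Type*} {S T : Finset V} (h : S ⊆ T) (x : Cfg Ω T) : Cfg Ω S :=
  fun v => x ⟨v.1, h v.2⟩

/-- Extend a configuration to a larger domain by arbitrary values. -/
noncomputable def extendCfg {Ω : V → Type*} [∀ v, Nonempty (Ω v)] {S T : Finset V}
    (h : S ⊆ T) (x : Cfg Ω S) : Cfg Ω T :=
  fun v => if hv : v.1 ∈ S then x ⟨v.1, hv⟩ else Classical.arbitrary (Ω v.1)

theorem restrict_extendCfg {Ω : V → Type*} [∀ v, Nonempty (Ω v)] {S T : Finset V}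
    (h : S ⊆ T) (x : Cfg Ω S) : restrict h (extendCfg h x) = x := by
  funext v; simp [restrict, extendCfg, v.2]

/-- Projection by maximization: `φ^{↓X}(x) = max { φ(z) : z ∈ Ω_D, z↓X = x }`. -/
noncomputable def projv {Ω : V → Type*} [∀ v, Fintype (Ω v)] [∀ v, Nonempty (Ω v)]
    [∀ v, DecidableEq (Ω v)] {X D : Finset V} (φ : Cfg Ω D → ℝ) (h : X ⊆ D)
    (x : Cfg Ω X) : ℝ :=
  (Finset.univ.filter fun z : Cfg Ω D => restrict h z = x).sup'
    ⟨extendCfg h x, Finset.mem_filter.mpr ⟨Finset.mem_univ _, restrict_extendCfg h x⟩⟩ φ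


lemma restrict_restrict {Ω : V → Type*} {A B C : Finset V} (h1 : A ⊆ B) (h2 : B ⊆ C)
    (x : Cfg Ω C) : restrict h1 (restrict h2 x) = restrict (h1.trans h2) x := rfl

lemma le_projv {Ω : V → Type*} [∀ v, Fintype (Ω v)] [∀ v, Nonempty (Ω v)]
    [∀ v, DecidableEq (Ω v)] {X D : Finset V} (φ : Cfg Ω D → ℝ) (h : X ⊆ D)
    {x : Cfg Ω X} {y : Cfg Ω D} (hy : restrict h y = x) : φ y ≤ projv φ h x :=
  Finset.le_sup' φ (Finset.mem_filter.mpr ⟨Finset.mem_univ _, hy⟩)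

lemma projv_exists {Ω : V → Type*} [∀ v, Fintype (Ω v)] [∀ v, Nonempty (Ω v)]
    [∀ v, DecidableEq (Ω v)] {X D : Finset V} (φ : Cfg Ω D → ℝ) (h : X ⊆ D)
    (x : Cfg Ω X) : ∃ y : Cfg Ω D, restrict h y = x ∧ projv φ h x = φ y := by
  have H : (Finset.univ.filter fun z : Cfg Ω D => restrict h z = x).Nonempty :=
    ⟨extendCfg h x, Finset.mem_filter.mpr ⟨Finset.mem_univ _, restrict_extendCfg h x⟩⟩
  obtain ⟨y, hy, hval⟩ := Finset.exists_mem_eq_sup' H φ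
  exact ⟨y, (Finset.mem_filter.mp hy).2, hval⟩

noncomputable def glue {Ω : V → Type*} {D₁ D₂ : Finset V}
    (y₁ : Cfg Ω D₁) (y₂ : Cfg Ω D₂) : Cfg Ω (D₁ ∪ D₂) :=
  fun v => if h : v.1 ∈ D₁ then y₁ ⟨v.1, h⟩
    else y₂ ⟨v.1, (Finset.mem_union.mp v.2).resolve_left h⟩

lemma restrict_glue_left {Ω : V → Type*} {D₁ D₂ : Finset V}
    (y₁ : Cfg Ω D₁) (y₂ : Cfg Ω D₂) :
    restrict (Finset.subset_union_left : D₁ ⊆ D₁ ∪ D₂) (glue y₁ y₂) = y₁ := by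
  funext v; simp [restrict, glue, v.2]

lemma restrict_glue_right {Ω : V → Type*} {D₁ D₂ : Finset V}
    {y₁ : Cfg Ω D₁} {y₂ : Cfg Ω D₂} {x : Cfg Ω (D₁ ∩ D₂)}
    (h₁ : restrict Finset.inter_subset_left y₁ = x)
    (h₂ : restrict Finset.inter_subset_right y₂ = x) :
    restrict (Finset.subset_union_right : D₂ ⊆ D₁ ∪ D₂) (glue y₁ y₂) = y₂ := by
  funext v
  by_cases hv : v.1 ∈ D₁
  · have hmem : v.1 ∈ D₁ ∩ D₂ := Finset.mem_inter.mpr ⟨hv, v.2⟩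
    have e1 := congrFun h₁ ⟨v.1, hmem⟩
    have e2 := congrFun h₂ ⟨v.1, hmem⟩
    simp only [restrict] at e1 e2 ⊢
    simp [glue, hv, e1, e2.symm]
  · simp [restrict, glue, hv]

/-- fully piecewise extensibility of the max-plus extension
family at the meet scope: for `z ∈ Ω_{D₁∪D₂}` extending `x ∈ Ω_{D₁∩D₂}`, `z`
maximizes `φ₁⊗φ₂` among extensions of `x` if and only if `z↓D₁` maximizes `φ₁`
among extensions of `x` and `z↓D₂` maximizes `φ₂` among extensions of `x`. -/
theorem maxplus_fully_piecewise_extensible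
    {V : Type*} [DecidableEq V] {Ω : V → Type*} [∀ v, Fintype (Ω v)]
    [∀ v, Nonempty (Ω v)] [∀ v, DecidableEq (Ω v)] {D₁ D₂ : Finset V}
    (φ₁ : Cfg Ω D₁ → ℝ) (φ₂ : Cfg Ω D₂ → ℝ)
    (x : Cfg Ω (D₁ ∩ D₂)) (z : Cfg Ω (D₁ ∪ D₂))
    (hz : restrict (Finset.inter_subset_left.trans Finset.subset_union_left :
            D₁ ∩ D₂ ⊆ D₁ ∪ D₂) z = x) :
    (φ₁ (restrict Finset.subset_union_left z) + φ₂ (restrict Finset.subset_union_right z)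
        = projv (fun w : Cfg Ω (D₁ ∪ D₂) =>
              φ₁ (restrict Finset.subset_union_left w)
                + φ₂ (restrict Finset.subset_union_right w))
            (Finset.inter_subset_left.trans Finset.subset_union_left) x)
    ↔ (φ₁ (restrict Finset.subset_union_left z) = projv φ₁ Finset.inter_subset_left x
        ∧ φ₂ (restrict Finset.subset_union_right z)
            = projv φ₂ Finset.inter_subset_right x) := by
  classical
  set hmu : D₁ ∩ D₂ ⊆ D₁ ∪ D₂ := Finset.inter_subset_left.trans Finset.subset_union_left
  have ha : φ₁ (restrict Finset.subset_union_left z) ≤ projv φ₁ Finset.inter_subset_left x := by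
    apply le_projv
    rw [restrict_restrict]
    exact hz
  have hb : φ₂ (restrict Finset.subset_union_right z) ≤ projv φ₂ Finset.inter_subset_right x := by
    apply le_projv
    rw [restrict_restrict]
    exact hz
  have hsum : projv (fun w : Cfg Ω (D₁ ∪ D₂) =>
        φ₁ (restrict Finset.subset_union_left w) + φ₂ (restrict Finset.subset_union_right w))
        hmu x
      = projv φ₁ Finset.inter_subset_left x + projv φ₂ Finset.inter_subset_right x := by
    apply le_antisymm
    · obtain ⟨w, hw, hval⟩ := projv_exists (fun w : Cfg Ω (D₁ ∪ D₂) =>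
        φ₁ (restrict Finset.subset_union_left w) + φ₂ (restrict Finset.subset_union_right w)) hmu x
      rw [hval]
      have h1 : φ₁ (restrict Finset.subset_union_left w) ≤ projv φ₁ Finset.inter_subset_left x := by
        apply le_projv; rw [restrict_restrict]; exact hw
      have h2 : φ₂ (restrict Finset.subset_union_right w) ≤ projv φ₂ Finset.inter_subset_right x := by
        apply le_projv; rw [restrict_restrict]; exact hw
      exact add_le_add h1 h2
    · obtain ⟨y₁, hy₁, hv₁⟩ := projv_exists φ₁ Finset.inter_subset_left x
      obtain ⟨y₂, hy₂, hv₂⟩ := projv_exists φ₂ Finset.inter_subset_right x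
      rw [hv₁, hv₂]
      have hg₁ := restrict_glue_left y₁ y₂
      have hg₂ := restrict_glue_right hy₁ hy₂
      have hgx : restrict hmu (glue y₁ y₂) = x := by
        rw [← restrict_restrict Finset.inter_subset_left Finset.subset_union_left, hg₁, hy₁]
      have := le_projv (fun w : Cfg Ω (D₁ ∪ D₂) =>
        φ₁ (restrict Finset.subset_union_left w) + φ₂ (restrict Finset.subset_union_right w))
        hmu hgx
      simpa [hg₁, hg₂] using this
  rw [hsum]
  constructor
  · intro h
    constructor <;> linarith
  · rintro ⟨h1, h2⟩
    rw [h1, h2]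
end
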